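/- Let S be a standard symmetric random walk, τ a stopping time with {S_{τ∧t}} uniformly integrable, and fix t ≥ 1. Let K = {k ∈ ℤ : k ≡ t−1 (mod 2)}. Then for every x ∈ ℤ, U_{S_{τ∧t}}(x) = U_{S_{τ∧(t−1)}}(x) + P(S_{t−1} = x, τ ≥ t)·1_{x ∈ K}. In particular, if t is odd then U_{S_{τ∧t}}(x) = U_{S_{τ∧(t−1)}}(x) for all odd x, and if t is even the same holds for all even x. -/

import Mathlib

open MeasureTheory ProbabilityTheory

lemma aux_abs (d : ℤ) : |(d:ℝ) - 1| + |(d:ℝ) + 1| - 2 * |(d:ℝ)| = if d = 0 then 2 else 0 := by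
  rcases eq_or_ne d 0 with h | h
  · simp [h]; norm_num
  · rw [if_neg h]
    rcases lt_or_gt_of_ne h with h' | h'
    · have h1 : (d:ℝ) ≤ -1 := by exact_mod_cast (by omega : d ≤ -1)
      rw [abs_of_nonpos (by linarith), abs_of_nonpos (by linarith), abs_of_nonpos (by linarith)]
      ring
    · have h1 : (1:ℝ) ≤ (d:ℝ) := by exact_mod_cast h'
      rw [abs_of_nonneg (by linarith), abs_of_nonneg (by linarith), abs_of_nonneg (by linarith)]
      ring

section main
variable {Ω : Type*} {m0 : MeasurableSpace Ω} (P : Measure Ω) [IsProbabilityMeasure P]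
    (F : Filtration ℕ m0) (X : ℕ → Ω → ℤ)

theorem stmt6' 
    (hmeas : ∀ i, Measurable (X i))
    (hadapted : ∀ i, Measurable[F (i + 1)] (X i))
    (hindepF : ∀ i, Indep (MeasurableSpace.comap (X i) inferInstance) (F i) P)
    (hdist : ∀ i, P (X i ⁻¹' {1}) = 1/2 ∧ P (X i ⁻¹' {-1}) = 1/2)
    (S : ℕ → Ω → ℤ) (hS : ∀ t ω, S t ω = ∑ i ∈ Finset.range t, X i ω)
    (τ : Ω → ℕ) (hτ : IsStoppingTime F (fun ω => (τ ω : WithTop ℕ)))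
    (hUI : UniformIntegrable (fun t ω => ((S (min (τ ω) t) ω : ℤ) : ℝ)) 1 P)
    (n : ℕ) (x : ℤ) :
      ∫ ω, |(x : ℝ) - (S (min (τ ω) (n + 1)) ω : ℝ)| ∂P
        = (∫ ω, |(x : ℝ) - (S (min (τ ω) n) ω : ℝ)| ∂P)
          + (P ({ω | n + 1 ≤ τ ω} ∩ {ω | S n ω = x})).toReal := by
  -- basic measurability
  have hSmeasF : ∀ k, Measurable[F k] (S k) := by
    intro k
    have hSk : S k = fun ω => ∑ i ∈ Finset.range k, X i ω := funext fun ω => hS k ω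
    rw [hSk]
    exact Finset.measurable_sum _ fun i hi =>
      ((hadapted i).mono (F.mono (Finset.mem_range.mp hi)) le_rfl)
  have hSmeas : ∀ k, Measurable (S k) := fun k => (hSmeasF k).mono (F.le k) le_rfl
  set A : Set Ω := {ω | n + 1 ≤ τ ω} with hA_def
  have hAmeasF : MeasurableSet[F n] A := by
    have : A = {ω | (τ ω : WithTop ℕ) ≤ (n : WithTop ℕ)}ᶜ := by ext ω; simp [hA_def]
    rw [this]; exact (hτ n).compl
  have hAmeas : MeasurableSet A := F.le n _ hAmeasF
  -- integrability of stopped walk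
  have hIntS : ∀ k, Integrable (fun ω => ((S (min (τ ω) k) ω : ℤ) : ℝ)) P := by
    intro k
    obtain ⟨C, hC⟩ := hUI.2.2
    exact memLp_one_iff_integrable.mp ⟨hUI.1 k, lt_of_le_of_lt (hC k) ENNReal.coe_lt_top⟩
  have hIntAbs : ∀ (k : ℕ),
      Integrable (fun ω => |(x : ℝ) - (S (min (τ ω) k) ω : ℝ)|) P :=
    fun k => ((integrable_const _).sub (hIntS k)).abs
  -- the increments are ±1 a.s.
  have hae : ∀ᵐ ω ∂P, X n ω = 1 ∨ X n ω = -1 := by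
    have hd : Disjoint (X n ⁻¹' {1}) (X n ⁻¹' {-1}) :=
      (Set.disjoint_singleton.mpr (by norm_num)).preimage _
    have hBmeas : MeasurableSet (X n ⁻¹' {-1}) := (hmeas n) (measurableSet_singleton _)
    have hBfull : P (X n ⁻¹' {1} ∪ X n ⁻¹' {-1}) = 1 := by
      rw [measure_union hd hBmeas, (hdist n).1, (hdist n).2, ENNReal.div_add_div_same]
      rw [one_add_one_eq_two]
      exact ENNReal.div_self (a := 2) (by norm_num) (by norm_num)
    have hcompl : P ((X n ⁻¹' {1} ∪ X n ⁻¹' {-1})ᶜ) = 0 := by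
      rw [measure_compl (((hmeas n) (measurableSet_singleton _)).union hBmeas) (measure_ne_top _ _),
        hBfull, measure_univ]
      exact tsub_self 1
    have hset : {a | ¬(X n a = 1 ∨ X n a = -1)} = (X n ⁻¹' {1} ∪ X n ⁻¹' {-1})ᶜ := by
      ext ω; simp [not_or]
    rw [ae_iff, hset]
    exact hcompl
  -- the helper functions
  set g1 : Ω → ℝ := A.indicator (fun ω => |(x : ℝ) - (S n ω : ℝ) - 1| - |(x : ℝ) - (S n ω : ℝ)|)
    with hg1_def
  set g2 : Ω → ℝ := A.indicator (fun ω => |(x : ℝ) - (S n ω : ℝ) + 1| - |(x : ℝ) - (S n ω : ℝ)|)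
    with hg2_def
  set e1 : Ω → ℝ := (X n ⁻¹' {1}).indicator (fun _ => (1:ℝ)) with he1_def
  set e2 : Ω → ℝ := (X n ⁻¹' {-1}).indicator (fun _ => (1:ℝ)) with he2_def
  have hSnR : Measurable[F n] (fun ω => (S n ω : ℝ)) := measurable_from_top.comp (hSmeasF n)
  have hg1F : Measurable[F n] g1 := by
    letI : MeasurableSpace Ω := F n
    exact ((((measurable_const.sub hSnR).sub measurable_const).abs).sub
      ((measurable_const.sub hSnR).abs)).indicator hAmeasF
  have hg2F : Measurable[F n] g2 := by
    letI : MeasurableSpace Ω := F n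
    exact ((((measurable_const.sub hSnR).add measurable_const).abs).sub
      ((measurable_const.sub hSnR).abs)).indicator hAmeasF
  have hg1_meas : Measurable g1 := hg1F.mono (F.le n) le_rfl
  have hg2_meas : Measurable g2 := hg2F.mono (F.le n) le_rfl
  have he1C : Measurable[MeasurableSpace.comap (X n) inferInstance] e1 :=
    measurable_const.indicator ⟨{1}, measurableSet_singleton _, rfl⟩
  have he2C : Measurable[MeasurableSpace.comap (X n) inferInstance] e2 :=
    measurable_const.indicator ⟨{-1}, measurableSet_singleton _, rfl⟩
  -- boundedness / integrability
  have hg_bdd : ∀ (u : ℝ) (ω : Ω),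
      |A.indicator (fun ω => |(x : ℝ) - (S n ω : ℝ) + u| - |(x : ℝ) - (S n ω : ℝ)|) ω| ≤ |u| := by
    intro u ω
    by_cases hω : ω ∈ A
    · rw [Set.indicator_of_mem hω]
      calc _ ≤ |((x : ℝ) - (S n ω : ℝ) + u) - ((x : ℝ) - (S n ω : ℝ))| :=
            abs_abs_sub_abs_le_abs_sub _ _
        _ = |u| := by ring_nf
    · rw [Set.indicator_of_notMem hω]
      simp
  have hg1_int : Integrable g1 P := by
    refine (integrable_const (1:ℝ)).mono' hg1_meas.aestronglyMeasurable
      (Filter.Eventually.of_forall fun ω => ?_)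
    have := hg_bdd (-1) ω
    simp only [← sub_eq_add_neg] at this
    simpa using this
  have hg2_int : Integrable g2 P := by
    refine (integrable_const (1:ℝ)).mono' hg2_meas.aestronglyMeasurable
      (Filter.Eventually.of_forall fun ω => ?_)
    have := hg_bdd 1 ω
    simpa using this
  have he1_int : Integrable e1 P :=
    (integrable_const (1:ℝ)).indicator ((hmeas n) (measurableSet_singleton _))
  have he2_int : Integrable e2 P :=
    (integrable_const (1:ℝ)).indicator ((hmeas n) (measurableSet_singleton _))
  -- independence
  have hIF : Indep (F n : MeasurableSpace Ω) (MeasurableSpace.comap (X n) inferInstance) P :=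
    (hindepF n).symm
  have hindep1 : IndepFun g1 e1 P := by
    rw [IndepFun_iff_Indep]
    exact indep_of_indep_of_le_left (indep_of_indep_of_le_right hIF he1C.comap_le) hg1F.comap_le
  have hindep2 : IndepFun g2 e2 P := by
    rw [IndepFun_iff_Indep]
    exact indep_of_indep_of_le_left (indep_of_indep_of_le_right hIF he2C.comap_le) hg2F.comap_le
  -- the pointwise decomposition
  have hdecomp : (fun ω => |(x : ℝ) - (S (min (τ ω) (n + 1)) ω : ℝ)|
        - |(x : ℝ) - (S (min (τ ω) n) ω : ℝ)|)
      =ᵐ[P] (g1 * e1 + g2 * e2) := by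
    filter_upwards [hae] with ω hω
    by_cases hA : n + 1 ≤ τ ω
    · have hmin1 : min (τ ω) (n + 1) = n + 1 := min_eq_right hA
      have hmin2 : min (τ ω) n = n := min_eq_right (by omega)
      have hstep : S (n + 1) ω = S n ω + X n ω := by
        rw [hS (n + 1) ω, hS n ω, Finset.sum_range_succ]
      have hωA : ω ∈ A := hA
      rcases hω with h1 | h1
      · have he1ω : e1 ω = 1 := Set.indicator_of_mem (by simp [Set.mem_preimage, h1]) _
        have he2ω : e2 ω = 0 := Set.indicator_of_notMem (by simp [Set.mem_preimage, h1]) _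
        simp only [Pi.add_apply, Pi.mul_apply, he1ω, he2ω, mul_one, mul_zero, add_zero,
          hg1_def, Set.indicator_of_mem hωA, hmin1, hmin2, hstep, h1]
        push_cast
        ring_nf
      · have he1ω : e1 ω = 0 := Set.indicator_of_notMem (by simp [Set.mem_preimage, h1]) _
        have he2ω : e2 ω = 1 := Set.indicator_of_mem (by simp [Set.mem_preimage, h1]) _
        simp only [Pi.add_apply, Pi.mul_apply, he1ω, he2ω, mul_one, mul_zero, zero_add,
          hg2_def, Set.indicator_of_mem hωA, hmin1, hmin2, hstep, h1]
        push_cast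
        ring_nf
    · have hωA : ω ∉ A := hA
      have hmin : min (τ ω) (n + 1) = min (τ ω) n := by omega
      simp only [Pi.add_apply, Pi.mul_apply, hg1_def, hg2_def, Set.indicator_of_notMem hωA,
        hmin, zero_mul, add_zero, sub_self, zero_add]
  -- compute the integral of the decomposition
  have hstep1 : ∫ ω, (|(x : ℝ) - (S (min (τ ω) (n + 1)) ω : ℝ)|
        - |(x : ℝ) - (S (min (τ ω) n) ω : ℝ)|) ∂P
      = (∫ ω, g1 ω ∂P) * (∫ ω, e1 ω ∂P) + (∫ ω, g2 ω ∂P) * (∫ ω, e2 ω ∂P) := by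
    rw [integral_congr_ae hdecomp]
    simp only [Pi.add_apply]
    rw [integral_add (hindep1.integrable_mul hg1_int he1_int)
        (hindep2.integrable_mul hg2_int he2_int),
      hindep1.integral_mul_eq_mul_integral hg1_int.aestronglyMeasurable he1_int.aestronglyMeasurable,
      hindep2.integral_mul_eq_mul_integral hg2_int.aestronglyMeasurable he2_int.aestronglyMeasurable]
  have hInte1 : ∫ ω, e1 ω ∂P = 1 / 2 := by
    rw [he1_def, integral_indicator_const (1:ℝ) ((hmeas n) (measurableSet_singleton _)),
      measureReal_def, (hdist n).1]
    simp [ENNReal.toReal_div]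
  have hInte2 : ∫ ω, e2 ω ∂P = 1 / 2 := by
    rw [he2_def, integral_indicator_const (1:ℝ) ((hmeas n) (measurableSet_singleton _)),
      measureReal_def, (hdist n).2]
    simp [ENNReal.toReal_div]
  -- g1 + g2 is 2 times the indicator of A ∩ {S n = x}
  have hsum : (fun ω => g1 ω + g2 ω)
      = (A ∩ {ω | S n ω = x}).indicator (fun _ => (2:ℝ)) := by
    funext ω
    by_cases hωA : ω ∈ A
    · rw [hg1_def, hg2_def]
      simp only [Set.indicator_of_mem hωA]
      have hx : (x : ℝ) - (S n ω : ℝ) = ((x - S n ω : ℤ) : ℝ) := by push_cast; ring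
      have := aux_abs (x - S n ω)
      rw [← hx] at this
      by_cases hSx : S n ω = x
      · have hd0 : x - S n ω = 0 := by omega
        rw [if_pos hd0] at this
        rw [Set.indicator_of_mem (Set.mem_inter hωA hSx)]
        linarith
      · have hd0 : ¬ (x - S n ω = 0) := by omega
        rw [if_neg hd0] at this
        rw [Set.indicator_of_notMem (by simp [hSx] : ω ∉ A ∩ {ω | S n ω = x})]
        linarith
    · rw [hg1_def, hg2_def]
      simp only [Set.indicator_of_notMem hωA, add_zero,
        Set.indicator_of_notMem (fun h => hωA h.1 : ω ∉ A ∩ {ω | S n ω = x})]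
  have hsum_int : (∫ ω, g1 ω ∂P) + (∫ ω, g2 ω ∂P)
      = 2 * (P (A ∩ {ω | S n ω = x})).toReal := by
    rw [← integral_add hg1_int hg2_int]
    have hm : MeasurableSet (A ∩ {ω | S n ω = x}) :=
      hAmeas.inter ((hSmeas n) (measurableSet_singleton x))
    calc ∫ ω, (g1 ω + g2 ω) ∂P
        = ∫ ω, (A ∩ {ω | S n ω = x}).indicator (fun _ => (2:ℝ)) ω ∂P := by
          rw [← hsum]
      _ = (P (A ∩ {ω | S n ω = x})).toReal • (2:ℝ) := integral_indicator_const _ hm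
      _ = 2 * (P (A ∩ {ω | S n ω = x})).toReal := by rw [smul_eq_mul]; ring
  -- final computation
  have hfinal : ∫ ω, (|(x : ℝ) - (S (min (τ ω) (n + 1)) ω : ℝ)|
        - |(x : ℝ) - (S (min (τ ω) n) ω : ℝ)|) ∂P
      = (P (A ∩ {ω | S n ω = x})).toReal := by
    rw [hstep1, hInte1, hInte2]
    rw [show (∫ ω, g1 ω ∂P) * (1/2) + (∫ ω, g2 ω ∂P) * (1/2)
        = ((∫ ω, g1 ω ∂P) + (∫ ω, g2 ω ∂P)) / 2 by ring, hsum_int]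
    ring
  rw [integral_sub (hIntAbs (n+1)) (hIntAbs n)] at hfinal
  linarith
end main


lemma parity_null {Ω : Type*} {m0 : MeasurableSpace Ω} (P : Measure Ω) [IsProbabilityMeasure P]
    (X : ℕ → Ω → ℤ) (hmeas : ∀ i, Measurable (X i))
    (hdist : ∀ i, P (X i ⁻¹' {1}) = 1/2 ∧ P (X i ⁻¹' {-1}) = 1/2)
    (S : ℕ → Ω → ℤ) (hS : ∀ t ω, S t ω = ∑ i ∈ Finset.range t, X i ω)
    (n : ℕ) (x : ℤ) (hx : x % 2 ≠ (n : ℤ) % 2) :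
    P {ω | S n ω = x} = 0 := by
  have hae : ∀ i, ∀ᵐ ω ∂P, X i ω = 1 ∨ X i ω = -1 := by
    intro i
    have hd : Disjoint (X i ⁻¹' {1}) (X i ⁻¹' {-1}) :=
      (Set.disjoint_singleton.mpr (by norm_num)).preimage _
    have hBmeas : MeasurableSet (X i ⁻¹' {-1}) := (hmeas i) (measurableSet_singleton _)
    have hBfull : P (X i ⁻¹' {1} ∪ X i ⁻¹' {-1}) = 1 := by
      rw [measure_union hd hBmeas, (hdist i).1, (hdist i).2, ENNReal.div_add_div_same,
        one_add_one_eq_two]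
      exact ENNReal.div_self (a := 2) (by norm_num) (by norm_num)
    have hcompl : P ((X i ⁻¹' {1} ∪ X i ⁻¹' {-1})ᶜ) = 0 := by
      rw [measure_compl (((hmeas i) (measurableSet_singleton _)).union hBmeas) (measure_ne_top _ _),
        hBfull, measure_univ]
      exact tsub_self 1
    have hset : {a | ¬(X i a = 1 ∨ X i a = -1)} = (X i ⁻¹' {1} ∪ X i ⁻¹' {-1})ᶜ := by
      ext ω; simp [not_or]
    rw [ae_iff, hset]
    exact hcompl
  have hgood : ∀ᵐ ω ∂P, ∀ i, i < n → (X i ω = 1 ∨ X i ω = -1) := by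
    rw [ae_all_iff]
    intro i
    by_cases hi : i < n
    · filter_upwards [hae i] with ω hω _
      exact hω
    · filter_upwards with ω h
      exact absurd h hi
  have hbad : P {ω | ¬ ∀ i, i < n → (X i ω = 1 ∨ X i ω = -1)} = 0 := ae_iff.mp hgood
  refine measure_mono_null ?_ hbad
  intro ω hω
  simp only [Set.mem_setOf_eq] at hω ⊢
  intro hall
  have hmod : ∀ i ∈ Finset.range n, X i ω % 2 = 1 := by
    intro i hi
    rcases hall i (Finset.mem_range.mp hi) with h | h <;> rw [h] <;> decide
  have hS2 : S n ω % 2 = (n : ℤ) % 2 := by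
    rw [hS n ω, Finset.sum_int_mod, Finset.sum_congr rfl hmod, Finset.sum_const,
      Finset.card_range, nsmul_eq_mul, mul_one]
  rw [hω] at hS2
  exact hx hS2


/-- One-step evolution of the potential of the stopped walk: for `t ≥ 1` and `x ∈ ℤ`,
`U_{S_{τ∧t}}(x) = U_{S_{τ∧(t-1)}}(x) + P(S_{t-1} = x, τ ≥ t)·1_{x ≡ t-1 (mod 2)}`. -/
theorem stmt6 {Ω : Type*} {m0 : MeasurableSpace Ω} (P : Measure Ω) [IsProbabilityMeasure P]
    (F : Filtration ℕ m0)
    (X : ℕ → Ω → ℤ)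
    (hmeas : ∀ i, Measurable (X i))
    (hadapted : ∀ i, Measurable[F (i + 1)] (X i))
    (hindep : iIndepFun X P)
    (hindepF : ∀ i, Indep (MeasurableSpace.comap (X i) inferInstance) (F i) P)
    (hdist : ∀ i, P (X i ⁻¹' {1}) = 1/2 ∧ P (X i ⁻¹' {-1}) = 1/2)
    (S : ℕ → Ω → ℤ) (hS : ∀ t ω, S t ω = ∑ i ∈ Finset.range t, X i ω)
    (τ : Ω → ℕ) (hτ : IsStoppingTime F (fun ω => (τ ω : WithTop ℕ)))
    (hUI : UniformIntegrable (fun t ω => ((S (min (τ ω) t) ω : ℤ) : ℝ)) 1 P)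
    (t : ℕ) (ht : 1 ≤ t) :
    (∀ x : ℤ,
      ∫ ω, |(x : ℝ) - (S (min (τ ω) t) ω : ℝ)| ∂P
        = (∫ ω, |(x : ℝ) - (S (min (τ ω) (t - 1)) ω : ℝ)| ∂P)
          + (P {ω | S (t - 1) ω = x ∧ t ≤ τ ω}).toReal
              * (if x % 2 = ((t : ℤ) - 1) % 2 then 1 else 0)) ∧
    (Odd t → ∀ x : ℤ, Odd x →
      ∫ ω, |(x : ℝ) - (S (min (τ ω) t) ω : ℝ)| ∂P
        = ∫ ω, |(x : ℝ) - (S (min (τ ω) (t - 1)) ω : ℝ)| ∂P) ∧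
    (Even t → ∀ x : ℤ, Even x →
      ∫ ω, |(x : ℝ) - (S (min (τ ω) t) ω : ℝ)| ∂P
        = ∫ ω, |(x : ℝ) - (S (min (τ ω) (t - 1)) ω : ℝ)| ∂P) := by
  obtain ⟨n, rfl⟩ : ∃ n, t = n + 1 := ⟨t - 1, by omega⟩
  have hsub : n + 1 - 1 = n := by omega
  have hmodc : ((n + 1 : ℕ) : ℤ) - 1 = (n : ℤ) := by push_cast; ring
  have hkey := fun x => stmt6' P F X hmeas hadapted hindepF hdist S hS τ hτ hUI n x
  have hpar : ∀ x : ℤ, x % 2 ≠ (n : ℤ) % 2 →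
      P ({ω | n + 1 ≤ τ ω} ∩ {ω | S n ω = x}) = 0 := fun x hx =>
    measure_mono_null Set.inter_subset_right (parity_null P X hmeas hdist S hS n x hx)
  have main : ∀ x : ℤ,
      ∫ ω, |(x : ℝ) - (S (min (τ ω) (n + 1)) ω : ℝ)| ∂P
        = (∫ ω, |(x : ℝ) - (S (min (τ ω) (n + 1 - 1)) ω : ℝ)| ∂P)
          + (P {ω | S (n + 1 - 1) ω = x ∧ n + 1 ≤ τ ω}).toReal
              * (if x % 2 = (((n + 1 : ℕ) : ℤ) - 1) % 2 then 1 else 0) := by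
    intro x
    have hsetEq : {ω | S n ω = x ∧ n + 1 ≤ τ ω}
        = {ω | n + 1 ≤ τ ω} ∩ {ω | S n ω = x} := by
      ext ω; simp only [Set.mem_setOf_eq, Set.mem_inter_iff]; tauto
    rw [hsub, hsetEq, hmodc]
    by_cases hpx : x % 2 = (n : ℤ) % 2
    · rw [if_pos hpx, mul_one]
      exact hkey x
    · rw [if_neg hpx, mul_zero, add_zero, hkey x, hpar x hpx]
      simp
  refine ⟨main, fun hodd x hx => ?_, fun heven x hx => ?_⟩
  · have h1 := main x
    have hxm : x % 2 = 1 := Int.odd_iff.mp hx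
    have hnat : (n + 1) % 2 = 1 := Nat.odd_iff.mp hodd
    have hnm : (((n + 1 : ℕ) : ℤ) - 1) % 2 = 0 := by omega
    rw [if_neg (by rw [hxm, hnm]; norm_num), mul_zero, add_zero] at h1
    exact h1
  · have h1 := main x
    have hxm : x % 2 = 0 := Int.even_iff.mp hx
    have hnat : (n + 1) % 2 = 0 := Nat.even_iff.mp heven
    have hnm : (((n + 1 : ℕ) : ℤ) - 1) % 2 = 1 := by omega
    rw [if_neg (by rw [hxm, hnm]; norm_num), mul_zero, add_zero] at h1
    exact h1
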